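/- There is no NITA (A,B) generated by a non-real element b_3 of degree 3, with no nontrivial basis elements of degree 1 or 2, satisfying b_3·b̄_3 = 1 + b_8, b_3² = b̄_3 + b_6 with b_6 ∈ B, and (b_3·b_8, b_3·b_8) = 5. -/
import Mathlib


/-- A normalized table algebra datum on a commutative `ℂ`-algebra `A`:
a distinguished basis `B` containing `1`, an involutive algebra
endomorphism `bar` permuting `B`, a bilinear form for which `B` is
orthonormal and which satisfies `(a, bc) = (a·b̄, c)`, nonnegative real
structure constants, and a degree homomorphism positive on `B`. -/
structure TAData (A : Type) [CommRing A] [Algebra ℂ A] : Type where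
  B : Finset A
  one_mem : (1 : A) ∈ B
  indep : LinearIndependent ℂ (fun b : {x : A // x ∈ B} => (b : A))
  span_top : Submodule.span ℂ (B : Set A) = ⊤
  bar : A →ₐ[ℂ] A
  bar_bar : ∀ a : A, bar (bar a) = a
  bar_mem : ∀ b ∈ B, bar b ∈ B
  ip : A →ₗ[ℂ] A →ₗ[ℂ] ℂ
  ip_symm : ∀ a b : A, ip a b = ip b a
  ip_self : ∀ b ∈ B, ip b b = 1
  ip_ne : ∀ b ∈ B, ∀ c ∈ B, b ≠ c → ip b c = 0
  ip_assoc : ∀ a b c : A, ip a (b * c) = ip (a * bar b) c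
  struct_nonneg : ∀ b ∈ B, ∀ c ∈ B, ∀ d ∈ B, ∃ r : ℝ, 0 ≤ r ∧ ip (b * c) d = (r : ℂ)
  deg : A →ₐ[ℂ] ℂ
  deg_pos : ∀ b ∈ B, ∃ r : ℝ, 0 < r ∧ deg b = (r : ℂ)

namespace TAData

variable {A : Type} [CommRing A] [Algebra ℂ A]

/-- Integrality (making a table algebra a NITA): all structure constants are
nonnegative integers and all degrees are positive integers. -/
def Integral (T : TAData A) : Prop :=
  (∀ b ∈ T.B, ∀ c ∈ T.B, ∀ d ∈ T.B, ∃ n : ℕ, T.ip (b * c) d = (n : ℂ)) ∧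
  (∀ b ∈ T.B, ∃ n : ℕ, 0 < n ∧ T.deg b = (n : ℂ))

/-- `L₁(B) = {1}` and `L₂(B) = ∅`: no nontrivial basis elements of degree 1 or 2. -/
def NoSmall (T : TAData A) : Prop :=
  (∀ b ∈ T.B, T.deg b = 1 → b = 1) ∧ (∀ b ∈ T.B, T.deg b ≠ 2)

/-- The table algebra is generated (as an algebra) by `b` (and its conjugate). -/
def GeneratedBy (T : TAData A) (b : A) : Prop :=
  Algebra.adjoin ℂ ({b, T.bar b} : Set A) = ⊤

/-- A table subset of `B`: contains `1`, closed under the involution and under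
supports of products. -/
def IsTableSubset (T : TAData A) (C : Set A) : Prop :=
  C ⊆ ↑T.B ∧ (1 : A) ∈ C ∧ (∀ b ∈ C, T.bar b ∈ C) ∧
    ∀ b ∈ C, ∀ c ∈ C, ∀ d ∈ T.B, T.ip (b * c) d ≠ 0 → d ∈ C

end TAData

namespace TAData

variable {A : Type} [CommRing A] [Algebra ℂ A] (T : TAData A)

lemma bar_inj : Function.Injective T.bar := by
  intro x y h
  have := congrArg T.bar h
  rwa [T.bar_bar, T.bar_bar] at this

noncomputable def expmap : A →ₗ[ℂ] A where
  toFun w := ∑ b ∈ T.B, T.ip w b • b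
  map_add' x y := by
    simp only [map_add, LinearMap.add_apply, add_smul, Finset.sum_add_distrib]
  map_smul' c x := by
    simp only [map_smul, LinearMap.smul_apply, RingHom.id_apply, Finset.smul_sum,
      smul_eq_mul, mul_smul]

lemma expand (w : A) : ∑ b ∈ T.B, T.ip w b • b = w := by
  have h : T.expmap = LinearMap.id := by
    apply LinearMap.ext_on T.span_top
    intro c hc
    have hc' : c ∈ T.B := hc
    show ∑ b ∈ T.B, T.ip c b • b = c
    rw [Finset.sum_eq_single_of_mem c hc']
    · rw [T.ip_self c hc', one_smul]
    · intro b hb hne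
      rw [T.ip_ne c hc' b hb (Ne.symm hne), zero_smul]
  exact congrFun (congrArg (fun f => f.toFun) h) w

lemma parseval (u w : A) : T.ip u w = ∑ b ∈ T.B, T.ip u b * T.ip w b := by
  conv_lhs => rw [← T.expand w]
  rw [map_sum]
  refine Finset.sum_congr rfl fun b hb => ?_
  rw [map_smul, smul_eq_mul, mul_comm]

lemma deg_expand (w : A) : T.deg w = ∑ b ∈ T.B, T.ip w b * T.deg b := by
  conv_lhs => rw [← T.expand w]
  rw [map_sum]
  refine Finset.sum_congr rfl fun b hb => ?_
  rw [map_smul, smul_eq_mul]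

lemma ip_bar (u : A) {c : A} (hc : c ∈ T.B) : T.ip (T.bar u) (T.bar c) = T.ip u c := by
  have h : (T.ip.flip (T.bar c)).comp T.bar.toLinearMap = T.ip.flip c := by
    apply LinearMap.ext_on T.span_top
    intro b hb
    have hb' : b ∈ T.B := hb
    show T.ip (T.bar b) (T.bar c) = T.ip b c
    by_cases hbc : b = c
    · subst hbc
      rw [T.ip_self _ (T.bar_mem b hb'), T.ip_self b hb']
    · rw [T.ip_ne _ (T.bar_mem b hb') _ (T.bar_mem c hc) (fun h => hbc (T.bar_inj h)),
        T.ip_ne b hb' c hc hbc]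
  exact congrFun (congrArg (fun f => f.toFun) h) u

lemma ip_add_left (x y z : A) : T.ip (x + y) z = T.ip x z + T.ip y z := by
  simp [map_add, LinearMap.add_apply]

lemma ip_add_add (x y : A) :
    T.ip (x + y) (x + y) = T.ip x x + T.ip x y + T.ip y x + T.ip y y := by
  simp only [map_add, LinearMap.add_apply]
  ring

lemma ip_sub_sub (x y : A) :
    T.ip (x - y) (x - y) = T.ip x x - T.ip x y - T.ip y x + T.ip y y := by
  simp only [map_sub, LinearMap.sub_apply]
  ring

lemma coeff_fun (hInt : T.Integral) {u v : A} (hu : u ∈ T.B) (hv : v ∈ T.B) :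
    ∃ f : A → ℕ, ∀ x ∈ T.B, T.ip (u * v) x = (f x : ℂ) := by
  classical
  refine ⟨fun x => if h : ∃ k : ℕ, T.ip (u * v) x = (k : ℂ) then h.choose else 0,
    fun x hx => ?_⟩
  obtain ⟨k, hk⟩ := hInt.1 u hu v hv x hx
  have hex : ∃ k : ℕ, T.ip (u * v) x = (k : ℂ) := ⟨k, hk⟩
  show T.ip (u * v) x = ((if h : ∃ k : ℕ, T.ip (u * v) x = (k : ℂ) then h.choose else 0 : ℕ) : ℂ)
  rw [dif_pos hex]
  exact hex.choose_spec

lemma deg_fun (hInt : T.Integral) :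
    ∃ d : A → ℕ, ∀ x ∈ T.B, T.deg x = (d x : ℂ) ∧ 0 < d x := by
  classical
  refine ⟨fun x => if h : ∃ n : ℕ, 0 < n ∧ T.deg x = (n : ℂ) then h.choose else 0,
    fun x hx => ?_⟩
  obtain ⟨n, hn, hdn⟩ := hInt.2 x hx
  have hex : ∃ n : ℕ, 0 < n ∧ T.deg x = (n : ℂ) := ⟨n, hn, hdn⟩
  show T.deg x = ((if h : ∃ n : ℕ, 0 < n ∧ T.deg x = (n : ℂ) then h.choose else 0 : ℕ) : ℂ) ∧
    0 < (if h : ∃ n : ℕ, 0 < n ∧ T.deg x = (n : ℂ) then h.choose else 0 : ℕ)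
  rw [dif_pos hex]
  exact ⟨hex.choose_spec.2, hex.choose_spec.1⟩

end TAData



/-- Theorem 4.2(1): there is no NITA generated by a non-real `b₃`
of degree 3 with `b₃·b̄₃ = 1 + b₈`, `b₃² = b̄₃ + b₆` and `(b₃b₈, b₃b₈) = 5`. -/
theorem stmt_7 {A : Type} [CommRing A] [Algebra ℂ A] (T : TAData A)
    (hInt : T.Integral) (hSmall : T.NoSmall)
    (b3 b8 b6 : A)
    (hb3 : b3 ∈ T.B) (hd3 : T.deg b3 = 3) (hnr : T.bar b3 ≠ b3)
    (hgen : T.GeneratedBy b3)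
    (hb8 : b8 ∈ T.B) (hd8 : T.deg b8 = 8)
    (hmul : b3 * T.bar b3 = 1 + b8)
    (hb6 : b6 ∈ T.B) (hd6 : T.deg b6 = 6)
    (hsq : b3 * b3 = T.bar b3 + b6)
    (hip : T.ip (b3 * b8) (b3 * b8) = 5) : False := by
  classical
  have hbb3 : T.bar b3 ∈ T.B := T.bar_mem b3 hb3
  have hbb6 : T.bar b6 ∈ T.B := T.bar_mem b6 hb6
  -- b8 is real
  have hbar8 : T.bar b8 = b8 := by
    have h := congrArg T.bar hmul
    rw [map_mul, T.bar_bar, map_add, map_one] at h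
    rw [mul_comm] at h
    rw [hmul] at h
    exact (add_left_cancel h).symm
  have hsqbar : T.bar b3 * T.bar b3 = b3 + T.bar b6 := by
    have h := congrArg T.bar hsq
    rwa [map_mul, map_add, T.bar_bar] at h
  have key3 : b3 * b8 = T.bar b6 + b6 * T.bar b3 := by
    linear_combination T.bar b3 * hsq - b3 * hmul + hsqbar
  -- degrees of conjugates
  have hdbar3 : T.deg (T.bar b3) = 3 := by
    have h := congrArg T.deg hmul
    rw [map_mul, map_add, map_one, hd3, hd8] at h
    have h' : (3 : ℂ) * T.deg (T.bar b3) = 3 * 3 := by rw [h]; norm_num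
    exact mul_left_cancel₀ (by norm_num) h'
  have hdbar6 : T.deg (T.bar b6) = 6 := by
    have h := congrArg T.deg hsqbar
    rw [map_mul, map_add, hdbar3, hd3] at h
    linear_combination -h
  -- the two integer parameters
  obtain ⟨t, ht⟩ := hInt.1 b6 hb6 (T.bar b3) hbb3 (T.bar b6) hbb6
  obtain ⟨s, hs⟩ := hInt.1 b6 hb6 (T.bar b6) hbb6 b8 hb8
  have hnorm1 : T.ip (b6 * T.bar b6) 1 = 1 := by
    rw [T.ip_symm, T.ip_assoc, one_mul, T.ip_self _ hbb6]
  have hnormA : T.ip (b6 * T.bar b3) (b6 * T.bar b3) = 1 + (s : ℂ) := by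
    rw [T.ip_assoc]
    have e1 : b6 * T.bar b3 * T.bar b6 = b6 * T.bar b6 * T.bar b3 := by ring
    rw [e1, ← T.ip_assoc, hmul, map_add, hnorm1, hs]
  have hts : 2 * t + s = 3 := by
    have h5 : (5 : ℂ) = 1 + (t : ℂ) + (t : ℂ) + (1 + (s : ℂ)) := by
      rw [← hip, key3, T.ip_add_add, T.ip_self _ hbb6,
        T.ip_symm (T.bar b6) (b6 * T.bar b3), ht, hnormA]
    have : ((2 * t + s : ℕ) : ℂ) = ((3 : ℕ) : ℂ) := by
      push_cast
      linear_combination -h5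
    exact_mod_cast this
  -- coefficient of b8 in b3*b6
  have hcoef8 : T.ip (b3 * b6) b8 = 1 + (t : ℂ) := by
    rw [T.ip_symm, T.ip_assoc]
    have hbark : T.bar b3 * b8 = b6 + T.bar b6 * b3 := by
      have h := congrArg T.bar key3
      rw [map_mul, map_add, map_mul] at h
      simp only [T.bar_bar] at h
      rw [hbar8] at h
      linear_combination h
    have e : b8 * T.bar b3 = b6 + T.bar b6 * b3 := by linear_combination hbark
    rw [e, T.ip_add_left, T.ip_self _ hb6]
    have h2 : T.ip (T.bar b6 * b3) b6 = (t : ℂ) := by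
      rw [T.ip_symm, mul_comm (T.bar b6) b3, T.ip_assoc, ht]
    rw [h2]
  -- norm of b3*b6
  have hnormP : T.ip (b3 * b6) (b3 * b6) = 1 + (s : ℂ) := by
    rw [T.ip_assoc]
    have e : b3 * b6 * T.bar b3 = b6 + b8 * b6 := by linear_combination b6 * hmul
    rw [e, T.ip_add_left, T.ip_self _ hb6]
    have h2 : T.ip (b8 * b6) b6 = (s : ℂ) := by
      rw [T.ip_symm, mul_comm b8 b6, T.ip_assoc, hs]
    rw [h2]
  -- coefficients of b3*b6
  obtain ⟨f, hf⟩ := T.coeff_fun hInt hb3 hb6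
  have hf8 : f b8 = 1 + t := by
    have h := (hf b8 hb8).symm.trans hcoef8
    exact_mod_cast h
  have hsum2 : ∑ b ∈ T.B, (f b) ^ 2 = 1 + s := by
    have h := T.parseval (b3 * b6) (b3 * b6)
    rw [hnormP] at h
    have h2 : ∑ b ∈ T.B, T.ip (b3 * b6) b * T.ip (b3 * b6) b
        = ∑ b ∈ T.B, ((f b : ℂ)) ^ 2 :=
      Finset.sum_congr rfl fun b hb => by rw [hf b hb]; ring
    have h3 : ((1 + s : ℕ) : ℂ) = ((∑ b ∈ T.B, (f b) ^ 2 : ℕ) : ℂ) := by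
      push_cast
      rw [h, h2]
    exact_mod_cast h3.symm
  -- t = 0, s = 3
  have hft : t = 0 := by
    have hle : (f b8) ^ 2 ≤ 1 + s := by
      rw [← hsum2]
      exact Finset.single_le_sum (f := fun b => (f b) ^ 2) (fun i _ => Nat.zero_le _) hb8
    rw [hf8] at hle
    have htle : t = 0 ∨ t = 1 := by omega
    rcases htle with h | h
    · exact h
    · subst h
      rw [pow_two] at hle
      omega
  have hs3 : s = 3 := by omega
  -- coefficient at 1 is 0
  have hbar3ne6 : T.bar b3 ≠ b6 := by
    intro h
    have := hdbar3
    rw [h, hd6] at this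
    norm_num at this
  have hf1 : f 1 = 0 := by
    have h1 : T.ip (b3 * b6) 1 = 0 := by
      rw [T.ip_symm, T.ip_assoc, one_mul, T.ip_ne _ hbb3 _ hb6 hbar3ne6]
    have := (hf 1 T.one_mem).symm.trans h1
    exact_mod_cast this
  -- the element v = b3*b6 - b8 and its coefficients
  set m : A → ℕ := fun x => if x = b8 then 0 else f x with hmdef
  have hm1 : m 1 = 0 := by
    rw [hmdef]
    by_cases h : (1 : A) = b8 <;> simp [h, hf1]
  have hm : ∀ x ∈ T.B, T.ip (b3 * b6 - b8) x = (m x : ℂ) := by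
    intro x hx
    rw [map_sub, LinearMap.sub_apply, hmdef]
    by_cases hxb : x = b8
    · subst hxb
      rw [hcoef8, T.ip_self _ hb8, hft]
      simp
    · rw [T.ip_ne _ hb8 _ hx (fun h => hxb h.symm), hf x hx]
      simp [hxb]
  have hnormv : T.ip (b3 * b6 - b8) (b3 * b6 - b8) = 3 := by
    rw [T.ip_sub_sub, hnormP, hcoef8, T.ip_self _ hb8, T.ip_symm b8 (b3 * b6), hcoef8,
      hft, hs3]
    norm_num
  -- Σ m² = 3
  have hm3 : ∑ b ∈ T.B, (m b) ^ 2 = 3 := by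
    have h := T.parseval (b3 * b6 - b8) (b3 * b6 - b8)
    rw [hnormv] at h
    have h2 : ((∑ b ∈ T.B, (m b) ^ 2 : ℕ) : ℂ) = ((3 : ℕ) : ℂ) := by
      push_cast
      calc ∑ x ∈ T.B, ((m x : ℂ)) ^ 2
          = ∑ b ∈ T.B, T.ip (b3 * b6 - b8) b * T.ip (b3 * b6 - b8) b :=
            Finset.sum_congr rfl fun b hb => by rw [hm b hb]; ring
        _ = 3 := h.symm
    exact_mod_cast h2
  -- degree functions
  obtain ⟨d, hd⟩ := T.deg_fun hInt
  have hge3 : ∀ b ∈ T.B, b ≠ (1 : A) → 3 ≤ d b := by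
    intro b hb hne
    obtain ⟨h1, h2⟩ := hd b hb
    have hne1 : d b ≠ 1 := by
      intro h
      exact hne (hSmall.1 b hb (by rw [h1, h]; norm_num))
    have hne2 : d b ≠ 2 := by
      intro h
      exact hSmall.2 b hb (by rw [h1, h]; norm_num)
    omega
  have hd8' : d b8 = 8 := by
    have h := (hd b8 hb8).1
    rw [hd8] at h
    exact_mod_cast h.symm
  -- Σ m·d = 10
  have hdeg_v : T.deg (b3 * b6 - b8) = 10 := by
    rw [map_sub, map_mul, hd3, hd6, hd8]
    norm_num
  have h10c : (10 : ℂ) = ∑ b ∈ T.B, (m b : ℂ) * (d b : ℂ) := by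
    calc (10 : ℂ) = T.deg (b3 * b6 - b8) := hdeg_v.symm
      _ = ∑ b ∈ T.B, T.ip (b3 * b6 - b8) b * T.deg b := T.deg_expand _
      _ = ∑ b ∈ T.B, (m b : ℂ) * (d b : ℂ) :=
          Finset.sum_congr rfl fun b hb => by rw [hm b hb, (hd b hb).1]
  have h10 : ∑ b ∈ T.B, m b * d b = 10 := by
    have h2 : ((∑ b ∈ T.B, m b * d b : ℕ) : ℂ) = ((10 : ℕ) : ℂ) := by
      push_cast
      exact h10c.symm
    exact_mod_cast h2
  -- Σ m·(d ∘ bar) = 10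
  have hdeg_barv : T.deg (T.bar (b3 * b6 - b8)) = 10 := by
    rw [map_sub, map_mul, hbar8, map_sub, map_mul, hdbar3, hdbar6, hd8]
    norm_num
  have hexpbar : T.deg (T.bar (b3 * b6 - b8))
      = ∑ b ∈ T.B, T.ip (b3 * b6 - b8) b * T.deg (T.bar b) := by
    conv_lhs => rw [← T.expand (b3 * b6 - b8)]
    rw [map_sum, map_sum]
    refine Finset.sum_congr rfl fun b hb => ?_
    rw [map_smul, map_smul, smul_eq_mul]
  have h10b : ∑ b ∈ T.B, m b * d (T.bar b) = 10 := by
    have h2 : ((∑ b ∈ T.B, m b * d (T.bar b) : ℕ) : ℂ) = ((10 : ℕ) : ℂ) := by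
      push_cast
      calc ∑ b ∈ T.B, (m b : ℂ) * (d (T.bar b) : ℂ)
          = ∑ b ∈ T.B, T.ip (b3 * b6 - b8) b * T.deg (T.bar b) :=
            Finset.sum_congr rfl fun b hb => by
              rw [hm b hb, (hd (T.bar b) (T.bar_mem b hb)).1]
        _ = T.deg (T.bar (b3 * b6 - b8)) := hexpbar.symm
        _ = 10 := hdeg_barv
    exact_mod_cast h2
  -- m takes values 0 or 1, with exactly three 1's
  have hmle : ∀ b ∈ T.B, m b ≤ 1 := by
    intro b hb
    have h : m b ^ 2 ≤ ∑ x ∈ T.B, m x ^ 2 :=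
      Finset.single_le_sum (f := fun b => (m b) ^ 2) (fun i _ => Nat.zero_le _) hb
    rw [hm3] at h
    by_contra hc
    push_neg at hc
    have h4 : 4 ≤ m b * m b := Nat.mul_le_mul hc hc
    rw [pow_two] at h
    omega
  set S : Finset A := T.B.filter (fun b => m b = 1) with hSdef
  have hScard : S.card = 3 := by
    have h1 : ∑ b ∈ T.B, m b = 3 := by
      rw [← hm3]
      refine Finset.sum_congr rfl fun b hb => ?_
      have := hmle b hb
      interval_cases h : m b <;> simp
    have h2 : ∑ b ∈ S, m b = ∑ b ∈ T.B, m b := by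
      refine Finset.sum_subset (Finset.filter_subset _ _) fun x hx hnx => ?_
      have hne : m x ≠ 1 := fun h => hnx (Finset.mem_filter.mpr ⟨hx, h⟩)
      have := hmle x hx
      omega
    have h3 : ∑ b ∈ S, m b = S.card := by
      rw [Finset.card_eq_sum_ones]
      refine Finset.sum_congr rfl fun b hb => (Finset.mem_filter.mp hb).2
    omega
  obtain ⟨a1, a2, a3, h12, h13, h23, hSeq⟩ := Finset.card_eq_three.mp hScard
  have hmemS : ∀ x ∈ S, x ∈ T.B ∧ m x = 1 := fun x hx => Finset.mem_filter.mp hx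
  have ha1S : a1 ∈ S := by rw [hSeq]; simp
  have ha2S : a2 ∈ S := by rw [hSeq]; simp
  have ha3S : a3 ∈ S := by rw [hSeq]; simp
  obtain ⟨ha1B, hma1⟩ := hmemS a1 ha1S
  obtain ⟨ha2B, hma2⟩ := hmemS a2 ha2S
  obtain ⟨ha3B, hma3⟩ := hmemS a3 ha3S
  have sum3 : ∀ g : A → ℕ, ∑ b ∈ S, g b = g a1 + g a2 + g a3 := by
    intro g
    rw [hSeq]
    rw [Finset.sum_insert (by simp [h12, h13]), Finset.sum_insert (by simp [h23]),
      Finset.sum_singleton]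
    ring
  have hsum_eq : ∀ g : A → ℕ, ∑ b ∈ T.B, m b * g b = g a1 + g a2 + g a3 := by
    intro g
    have h2 : ∑ b ∈ S, m b * g b = ∑ b ∈ T.B, m b * g b := by
      refine Finset.sum_subset (Finset.filter_subset _ _) fun x hx hnx => ?_
      have hne : m x ≠ 1 := fun h => hnx (Finset.mem_filter.mpr ⟨hx, h⟩)
      have := hmle x hx
      have : m x = 0 := by omega
      rw [this, zero_mul]
    have h3 : ∑ b ∈ S, m b * g b = ∑ b ∈ S, g b := by
      refine Finset.sum_congr rfl fun x hx => ?_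
      rw [(hmemS x hx).2, one_mul]
    rw [← h2, h3, sum3]
  have hx10 : d a1 + d a2 + d a3 = 10 := by rw [← hsum_eq (fun b => d b)]; exact h10
  have hy10 : d (T.bar a1) + d (T.bar a2) + d (T.bar a3) = 10 := by
    rw [← hsum_eq (fun b => d (T.bar b))]; exact h10b
  -- elements of S are ≠ 1 and have degree ≥ 3 (also for their bars)
  have hne1 : ∀ x ∈ S, x ≠ (1 : A) := by
    intro x hx h
    have := (hmemS x hx).2
    rw [h, hm1] at this
    omega
  have hbarne1 : ∀ x ∈ S, T.bar x ≠ (1 : A) := by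
    intro x hx h
    have h2 := congrArg T.bar h
    rw [T.bar_bar, map_one] at h2
    exact hne1 x hx h2
  have hxge : ∀ x ∈ S, 3 ≤ d x := fun x hx => hge3 x (hmemS x hx).1 (hne1 x hx)
  have hyge : ∀ x ∈ S, 3 ≤ d (T.bar x) := fun x hx =>
    hge3 (T.bar x) (T.bar_mem x (hmemS x hx).1) (hbarne1 x hx)
  have hx1 := hxge a1 ha1S; have hx2 := hxge a2 ha2S; have hx3 := hxge a3 ha3S
  have hy1 := hyge a1 ha1S; have hy2 := hyge a2 ha2S; have hy3 := hyge a3 ha3S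
  have hx_d : (d a1 = 3 ∧ d a2 = 3) ∨ (d a1 = 3 ∧ d a3 = 3) ∨ (d a2 = 3 ∧ d a3 = 3) := by
    omega
  have hy_d : (d (T.bar a1) = 3 ∧ d (T.bar a2) = 3) ∨
      (d (T.bar a1) = 3 ∧ d (T.bar a3) = 3) ∨
      (d (T.bar a2) = 3 ∧ d (T.bar a3) = 3) := by
    omega
  obtain ⟨p, q, hpB, hqB, hmp, hmq, hpq, hdp, hdbq⟩ :
      ∃ p q, p ∈ T.B ∧ q ∈ T.B ∧ m p = 1 ∧ m q = 1 ∧ p ≠ q ∧ d p = 3 ∧ d (T.bar q) = 3 := by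
    rcases hx_d with ⟨u1, u2⟩ | ⟨u1, u2⟩ | ⟨u1, u2⟩ <;>
      rcases hy_d with ⟨w1, w2⟩ | ⟨w1, w2⟩ | ⟨w1, w2⟩
    · exact ⟨a1, a2, ha1B, ha2B, hma1, hma2, h12, u1, w2⟩
    · exact ⟨a1, a3, ha1B, ha3B, hma1, hma3, h13, u1, w2⟩
    · exact ⟨a1, a3, ha1B, ha3B, hma1, hma3, h13, u1, w2⟩
    · exact ⟨a1, a2, ha1B, ha2B, hma1, hma2, h12, u1, w2⟩
    · exact ⟨a1, a3, ha1B, ha3B, hma1, hma3, h13, u1, w2⟩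
    · exact ⟨a1, a2, ha1B, ha2B, hma1, hma2, h12, u1, w1⟩
    · exact ⟨a2, a1, ha2B, ha1B, hma2, hma1, h12.symm, u1, w1⟩
    · exact ⟨a2, a1, ha2B, ha1B, hma2, hma1, h12.symm, u1, w1⟩
    · exact ⟨a2, a3, ha2B, ha3B, hma2, hma3, h23, u1, w2⟩
  -- p,q are not b8, and have coefficient 1 in b3*b6
  have hpne8 : p ≠ b8 := by
    intro h
    rw [hmdef] at hmp
    simp [h] at hmp
  have hqne8 : q ≠ b8 := by
    intro h
    rw [hmdef] at hmq
    simp [h] at hmq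
  have hfp1 : T.ip (b3 * b6) p = 1 := by
    rw [hf p hpB]
    rw [hmdef] at hmp
    simp [hpne8] at hmp
    rw [hmp]
    norm_num
  have hfq1 : T.ip (b3 * b6) q = 1 := by
    rw [hf q hqB]
    rw [hmdef] at hmq
    simp [hqne8] at hmq
    rw [hmq]
    norm_num
  have hdegp : T.deg p = 3 := by
    rw [(hd p hpB).1, hdp]; norm_num
  have hdegbq : T.deg (T.bar q) = 3 := by
    rw [(hd (T.bar q) (T.bar_mem q hqB)).1, hdbq]; norm_num
  -- coefficients of g = p * bar q
  obtain ⟨k, hk⟩ := T.coeff_fun hInt hpB (T.bar_mem q hqB)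
  have hk1 : k 1 = 0 := by
    have h1 : T.ip (p * T.bar q) 1 = 0 := by
      rw [T.ip_symm, T.ip_assoc, one_mul, T.ip_bar p hqB, T.ip_ne p hpB q hqB hpq]
    have := (hk 1 T.one_mem).symm.trans h1
    exact_mod_cast this
  -- coefficients of b3 * bar p and b3 * bar q at bar b6
  obtain ⟨fp, hfp⟩ := T.coeff_fun hInt hb3 (T.bar_mem p hpB)
  obtain ⟨fq, hfq⟩ := T.coeff_fun hInt hb3 (T.bar_mem q hqB)
  have hfpb6 : fp (T.bar b6) = 1 := by
    have h1 : T.ip (b3 * T.bar p) (T.bar b6) = 1 := by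
      rw [T.ip_symm, T.ip_assoc]
      have e : T.bar b6 * T.bar b3 = T.bar (b3 * b6) := by rw [map_mul]; ring
      rw [e, T.ip_bar _ hpB, hfp1]
    have := (hfp (T.bar b6) hbb6).symm.trans h1
    exact_mod_cast this
  have hfqb6 : fq (T.bar b6) = 1 := by
    have h1 : T.ip (b3 * T.bar q) (T.bar b6) = 1 := by
      rw [T.ip_symm, T.ip_assoc]
      have e : T.bar b6 * T.bar b3 = T.bar (b3 * b6) := by rw [map_mul]; ring
      rw [e, T.ip_bar _ hqB, hfq1]
    have := (hfq (T.bar b6) hbb6).symm.trans h1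
    exact_mod_cast this
  -- k b8 ≥ 1
  have hkb8 : 1 ≤ k b8 := by
    have hchain : T.ip (p * T.bar q) b8 = T.ip (b3 * T.bar p) (b3 * T.bar q) := by
      have hL : T.ip (p * T.bar q) b8 = T.ip (b8 * T.bar p) (T.bar q) := by
        rw [T.ip_symm, T.ip_assoc]
      have hR : T.ip (b3 * T.bar p) (b3 * T.bar q)
          = T.ip (b8 * T.bar p) (T.bar q) := by
        rw [T.ip_assoc]
        have e2 : b3 * T.bar p * T.bar b3 = T.bar p + b8 * T.bar p := by
          linear_combination T.bar p * hmul
        rw [e2, T.ip_add_left, T.ip_bar p hqB, T.ip_ne p hpB q hqB hpq, zero_add]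
      rw [hL, hR]
    have hpar : T.ip (b3 * T.bar p) (b3 * T.bar q)
        = ((∑ b ∈ T.B, fp b * fq b : ℕ) : ℂ) := by
      rw [T.parseval]
      push_cast
      refine Finset.sum_congr rfl fun b hb => ?_
      rw [hfp b hb, hfq b hb]
    have hsumge : 1 ≤ ∑ b ∈ T.B, fp b * fq b := by
      have h : fp (T.bar b6) * fq (T.bar b6) ≤ ∑ b ∈ T.B, fp b * fq b :=
        Finset.single_le_sum (f := fun b => fp b * fq b) (fun i _ => Nat.zero_le _) hbb6
      rw [hfpb6, hfqb6] at h
      omega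
    have hkb : (k b8 : ℂ) = ((∑ b ∈ T.B, fp b * fq b : ℕ) : ℂ) := by
      rw [← hk b8 hb8, hchain, hpar]
    have : k b8 = ∑ b ∈ T.B, fp b * fq b := by exact_mod_cast hkb
    omega
  -- degree of p * bar q is 9
  have hdeg9 : ∑ b ∈ T.B, k b * d b = 9 := by
    have hdg : T.deg (p * T.bar q) = 9 := by
      rw [map_mul, hdegp, hdegbq]; norm_num
    have h9c : (9 : ℂ) = ∑ b ∈ T.B, (k b : ℂ) * (d b : ℂ) := by
      calc (9 : ℂ) = T.deg (p * T.bar q) := hdg.symm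
        _ = ∑ b ∈ T.B, T.ip (p * T.bar q) b * T.deg b := T.deg_expand _
        _ = ∑ b ∈ T.B, (k b : ℂ) * (d b : ℂ) :=
            Finset.sum_congr rfl fun b hb => by rw [hk b hb, (hd b hb).1]
    have h2 : ((∑ b ∈ T.B, k b * d b : ℕ) : ℂ) = ((9 : ℕ) : ℂ) := by
      push_cast
      exact h9c.symm
    exact_mod_cast h2
  -- final contradiction
  have hsplit : k b8 * d b8 + ∑ b ∈ T.B.erase b8, k b * d b = ∑ b ∈ T.B, k b * d b :=
    Finset.add_sum_erase T.B (fun b => k b * d b) hb8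
  rw [hdeg9, hd8'] at hsplit
  have hk8 : k b8 = 1 := by omega
  have hrest : ∑ b ∈ T.B.erase b8, k b * d b = 1 := by omega
  obtain ⟨b, hbmem, hbne⟩ := Finset.exists_ne_zero_of_sum_ne_zero
    (s := T.B.erase b8) (f := fun b => k b * d b) (by rw [hrest]; exact one_ne_zero)
  have hble : k b * d b ≤ 1 := by
    rw [← hrest]
    exact Finset.single_le_sum (f := fun b => k b * d b) (fun i _ => Nat.zero_le _) hbmem
  have hbB : b ∈ T.B := Finset.mem_of_mem_erase hbmem
  have hbne1 : b ≠ (1 : A) := by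
    intro h
    rw [h, hk1, zero_mul] at hbne
    exact hbne rfl
  have h3 : 3 ≤ d b := hge3 b hbB hbne1
  have hkb : 1 ≤ k b := Nat.pos_of_ne_zero (fun h => hbne (by simp [h]))
  have : 3 ≤ k b * d b := by
    calc 3 = 1 * 3 := by norm_num
    _ ≤ k b * d b := Nat.mul_le_mul hkb h3
  omega
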